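/- Let c be an edge-colouring of K_n with no monochromatic K_m and no rainbow K_4, let A, B be disjoint vertex sets, and let H be a subgraph consisting of one edge between A and B for each colour used only between A and B. Then any two vertices x, y in B have at most m−1 common neighbours in H. -/

import Mathlib

/-- No monochromatic complete subgraph on `m` vertices. -/
def NoMonoClique (n m : ℕ) (c : Sym2 (Fin n) → ℕ) : Prop :=
  ¬ ∃ S : Finset (Fin n), S.card = m ∧
      ∃ col, ∀ x ∈ S, ∀ y ∈ S, x ≠ y → c s(x, y) = col

/-- No rainbow complete subgraph on 4 vertices. -/
def NoRainbowK4 (n : ℕ) (c : Sym2 (Fin n) → ℕ) : Prop :=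
  ¬ ∃ S : Finset (Fin n), S.card = 4 ∧
      ∀ x ∈ S, ∀ y ∈ S, ∀ z ∈ S, ∀ w ∈ S,
        x ≠ y → z ≠ w → s(x, y) ≠ s(z, w) → c s(x, y) ≠ c s(z, w)

/-- `e` is an edge joining `A` to `B`. -/
def Crosses {n : ℕ} (A B : Finset (Fin n)) (e : Sym2 (Fin n)) : Prop :=
  ∃ a ∈ A, ∃ b ∈ B, e = s(a, b)

set_option maxHeartbeats 4000000 in
theorem common_neighbours_bound (n m : ℕ) (hm : 3 ≤ m) (c : Sym2 (Fin n) → ℕ)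
    (hmono : NoMonoClique n m c) (hrain : NoRainbowK4 n c)
    (A B : Finset (Fin n)) (hAB : Disjoint A B)
    (H : SimpleGraph (Fin n)) [DecidableRel H.Adj]
    -- every edge of `H` joins `A` to `B`
    (hHcross : ∀ e ∈ H.edgeFinset, Crosses A B e)
    -- the edges of `H` have pairwise distinct colours (an SDR of the colours)
    (hHinj : ∀ e ∈ H.edgeFinset, ∀ f ∈ H.edgeFinset, c e = c f → e = f)
    -- each colour of an edge of `H` is used only on edges joining `A` to `B`
    (hHonly : ∀ e ∈ H.edgeFinset, ∀ f : Sym2 (Fin n), ¬ f.IsDiag →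
      c f = c e → Crosses A B f) :
    ∀ x ∈ B, ∀ y ∈ B, x ≠ y →
      (H.neighborFinset x ∩ H.neighborFinset y).card ≤ m - 1 := by
  intro x hx y hy hxy
  by_contra hcard
  push_neg at hcard
  -- basic helpers
  have hnAA : ∀ u v : Fin n, u ∈ A → v ∈ A → ¬ Crosses A B s(u, v) := by
    rintro u v hu hv ⟨a', ha', b', hb', heq⟩
    rcases Sym2.eq_iff.1 heq with ⟨h1, h2⟩ | ⟨h1, h2⟩
    · exact (Finset.disjoint_left.1 hAB (h2 ▸ hv)) hb'
    · exact (Finset.disjoint_left.1 hAB (h1 ▸ hu)) hb'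
  have hnBB : ∀ u v : Fin n, u ∈ B → v ∈ B → ¬ Crosses A B s(u, v) := by
    rintro u v hu hv ⟨a', ha', b', hb', heq⟩
    rcases Sym2.eq_iff.1 heq with ⟨h1, h2⟩ | ⟨h1, h2⟩
    · exact (Finset.disjoint_right.1 hAB hu) (h1 ▸ ha')
    · exact (Finset.disjoint_right.1 hAB hv) (h2 ▸ ha')
  have hmemA : ∀ z : Fin n, z ∈ B → ∀ a : Fin n, H.Adj z a → a ∈ A := by
    intro z hz a hadj
    have he : s(z, a) ∈ H.edgeFinset := by
      rw [SimpleGraph.mem_edgeFinset, SimpleGraph.mem_edgeSet]; exact hadj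
    obtain ⟨a', ha', b', hb', heq⟩ := hHcross _ he
    rcases Sym2.eq_iff.1 heq with ⟨h1, h2⟩ | ⟨h1, h2⟩
    · exact absurd (h1 ▸ ha') (Finset.disjoint_right.1 hAB hz)
    · exact h2 ▸ ha'
  have hTcard : m ≤ (H.neighborFinset x ∩ H.neighborFinset y).card := by omega
  obtain ⟨S, hST, hScard⟩ :=
    Finset.exists_subset_card_eq hTcard
  have key : ∀ a ∈ S, ∀ b ∈ S, a ≠ b → c s(a, b) = c s(x, y) := by
    intro a haS b hbS hab
    have haT := hST haS
    have hbT := hST hbS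
    simp only [Finset.mem_inter, SimpleGraph.mem_neighborFinset] at haT hbT
    obtain ⟨hax, hay⟩ := haT
    obtain ⟨hbx, hby⟩ := hbT
    have haA : a ∈ A := hmemA x hx a hax
    have hbA : b ∈ A := hmemA x hx b hbx
    have nax : a ≠ x := fun h => (Finset.disjoint_left.1 hAB haA) (h ▸ hx)
    have nay : a ≠ y := fun h => (Finset.disjoint_left.1 hAB haA) (h ▸ hy)
    have nbx : b ≠ x := fun h => (Finset.disjoint_left.1 hAB hbA) (h ▸ hx)
    have nby : b ≠ y := fun h => (Finset.disjoint_left.1 hAB hbA) (h ▸ hy)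
    have eax : s(a, x) ∈ H.edgeFinset := by
      rw [SimpleGraph.mem_edgeFinset, SimpleGraph.mem_edgeSet]; exact hax.symm
    have eay : s(a, y) ∈ H.edgeFinset := by
      rw [SimpleGraph.mem_edgeFinset, SimpleGraph.mem_edgeSet]; exact hay.symm
    have ebx : s(b, x) ∈ H.edgeFinset := by
      rw [SimpleGraph.mem_edgeFinset, SimpleGraph.mem_edgeSet]; exact hbx.symm
    have eby : s(b, y) ∈ H.edgeFinset := by
      rw [SimpleGraph.mem_edgeFinset, SimpleGraph.mem_edgeSet]; exact hby.symm
    -- pairwise distinct colours among the four H-edges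
    have d1 : c s(a, x) ≠ c s(a, y) := by
      intro h
      rcases Sym2.eq_iff.1 (hHinj _ eax _ eay h) with ⟨h1, h2⟩ | ⟨h1, h2⟩ <;> simp_all
    have d2 : c s(a, x) ≠ c s(b, x) := by
      intro h
      rcases Sym2.eq_iff.1 (hHinj _ eax _ ebx h) with ⟨h1, h2⟩ | ⟨h1, h2⟩ <;> simp_all
    have d3 : c s(a, x) ≠ c s(b, y) := by
      intro h
      rcases Sym2.eq_iff.1 (hHinj _ eax _ eby h) with ⟨h1, h2⟩ | ⟨h1, h2⟩ <;> simp_all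
    have d4 : c s(a, y) ≠ c s(b, x) := by
      intro h
      rcases Sym2.eq_iff.1 (hHinj _ eay _ ebx h) with ⟨h1, h2⟩ | ⟨h1, h2⟩ <;> simp_all
    have d5 : c s(a, y) ≠ c s(b, y) := by
      intro h
      rcases Sym2.eq_iff.1 (hHinj _ eay _ eby h) with ⟨h1, h2⟩ | ⟨h1, h2⟩ <;> simp_all
    have d6 : c s(b, x) ≠ c s(b, y) := by
      intro h
      rcases Sym2.eq_iff.1 (hHinj _ ebx _ eby h) with ⟨h1, h2⟩ | ⟨h1, h2⟩ <;> simp_all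
    have ndab : ¬ (s(a, b) : Sym2 (Fin n)).IsDiag := by simp [hab]
    have ndxy : ¬ (s(x, y) : Sym2 (Fin n)).IsDiag := by simp [hxy]
    -- c s(a,b) differs from the colours of the four H-edges
    have cab : ∀ e ∈ H.edgeFinset, c s(a, b) ≠ c e := by
      intro e he h
      exact hnAA a b haA hbA (hHonly e he _ ndab h)
    have cxy : ∀ e ∈ H.edgeFinset, c s(x, y) ≠ c e := by
      intro e he h
      exact hnBB x y hx hy (hHonly e he _ ndxy h)
    have cab1 := cab _ eax
    have cab2 := cab _ eay
    have cab3 := cab _ ebx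
    have cab4 := cab _ eby
    have cxy1 := cxy _ eax
    have cxy2 := cxy _ eay
    have cxy3 := cxy _ ebx
    have cxy4 := cxy _ eby
    by_contra hne
    apply hrain
    clear hHcross hHinj hHonly hmono hcard hTcard hmemA hnAA hnBB cab cxy
      eax eay ebx eby hST hScard haS hbS hax hay hbx hby ndab ndxy S
    refine ⟨{a, b, x, y}, ?_, ?_⟩
    · rw [Finset.card_insert_of_notMem (by simp [hab, nax, nay]),
        Finset.card_insert_of_notMem (by simp [nbx, nby]),
        Finset.card_insert_of_notMem (by simp [hxy]), Finset.card_singleton]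
    · intro p hp q hq r hr s hs hpq hrs hedge
      simp only [Finset.mem_insert, Finset.mem_singleton] at hp hq hr hs
      rcases hp with rfl | rfl | rfl | rfl <;>
        rcases hq with rfl | rfl | rfl | rfl <;>
          rcases hr with rfl | rfl | rfl | rfl <;>
            rcases hs with rfl | rfl | rfl | rfl <;>
              (try simp only [Sym2.eq_swap] at *) <;>
              (first
                | exact absurd rfl hpq
                | exact absurd rfl hrs
                | exact absurd rfl hedge
                | assumption
                | exact fun hcc => absurd hcc.symm (by assumption))
  exact hmono ⟨S, hScard, c s(x, y), key⟩
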